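/- Let N, M be natural numbers with 2M < N, and let |M,N⟩ : (Fin N → Fin 2) → ℂ be the symmetric Dicke state, defined by |M,N⟩(j) = 1 if card {i : j i = 1} = M and |M,N⟩(j) = 0 otherwise. Then every normalized state ψ in the closure of the SLOCC cone of |M,N⟩ under SL(2,ℂ)^N satisfies ∑_{i ∈ Fin N} λ_max(ρ⁽ⁱ⁾(ψ)) ≥ N − M. -/

import Mathlib

open scoped BigOperators
open Matrix
set_option maxHeartbeats 1000000

/-- The `i`-th one-qubit reduced density matrix of an `N`-qubit state. -/
noncomputable def qrdm {N : ℕ} (ψ : (Fin N → Fin 2) → ℂ) (i : Fin N) :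
    Matrix (Fin 2) (Fin 2) ℂ :=
  fun k l => ∑ j : Fin N → Fin 2,
    if j i = k then ψ j * (starRingEnd ℂ) (ψ (Function.update j i l)) else 0

/-- The largest real eigenvalue of a (Hermitian) complex matrix. -/
noncomputable def lmax {n : ℕ} (M : Matrix (Fin n) (Fin n) ℂ) : ℝ :=
  sSup {r : ℝ | Module.End.HasEigenvalue (Matrix.mulVecLin M) ((r : ℂ))}

/-- The symmetric Dicke state `|M,N⟩` with `M` excitations. -/
noncomputable def dicke (N M : ℕ) : (Fin N → Fin 2) → ℂ :=
  fun j => if (Finset.univ.filter fun i => j i = 1).card = M then 1 else 0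

/-- The Kronecker/tensor product action of `SL(2,ℂ)^N` on `N`-qubit states. -/
noncomputable def qact {N : ℕ} (g : Fin N → Matrix.SpecialLinearGroup (Fin 2) ℂ)
    (ψ : (Fin N → Fin 2) → ℂ) : (Fin N → Fin 2) → ℂ :=
  fun j => ∑ m : Fin N → Fin 2,
    (∏ i, (g i : Matrix (Fin 2) (Fin 2) ℂ) (j i) (m i)) * ψ m

/-- The SLOCC cone of an `N`-qubit state. -/
def qcone {N : ℕ} (ψ : (Fin N → Fin 2) → ℂ) : Set ((Fin N → Fin 2) → ℂ) :=
  {φ | ∃ (c : ℂ) (g : Fin N → Matrix.SpecialLinearGroup (Fin 2) ℂ), φ = c • qact g ψ}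

namespace DickeAux

variable {N : ℕ}

local notation "conj'" => (starRingEnd ℂ)

lemma sum_slice (i : Fin N) (k : Fin 2) (G : (Fin N → Fin 2) → ℂ) :
    ∑ j : Fin N → Fin 2, (if j i = k then G j else 0)
      = ∑ j : Fin N → Fin 2, (if j i = 0 then G (Function.update j i k) else 0) := by
  rw [← Finset.sum_filter, ← Finset.sum_filter]
  refine Finset.sum_nbij' (fun j => Function.update j i 0)
    (fun j => Function.update j i k) ?_ ?_ ?_ ?_ ?_ <;>
  · intro a ha
    simp only [Finset.mem_filter, Finset.mem_univ, true_and] at ha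
    simp [Function.update_idem, ← ha, Function.update_eq_self]

lemma sum_split (i : Fin N) (G : (Fin N → Fin 2) → ℂ) :
    ∑ j : Fin N → Fin 2, G j
      = ∑ j : Fin N → Fin 2, (if j i = 0 then ∑ s : Fin 2, G (Function.update j i s) else 0) := by
  have h1 : ∀ j : Fin N → Fin 2, G j = ∑ s : Fin 2, (if j i = s then G j else 0) := by
    intro j; rw [Finset.sum_ite_eq (Finset.univ) (j i) (fun _ => G j)]; simp
  calc ∑ j : Fin N → Fin 2, G j
      = ∑ j : Fin N → Fin 2, ∑ s : Fin 2, (if j i = s then G j else 0) :=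
        Finset.sum_congr rfl fun j _ => h1 j
    _ = ∑ s : Fin 2, ∑ j : Fin N → Fin 2, (if j i = s then G j else 0) := Finset.sum_comm
    _ = ∑ s : Fin 2, ∑ j : Fin N → Fin 2, (if j i = 0 then G (Function.update j i s) else 0) :=
        Finset.sum_congr rfl fun s _ => sum_slice i s G
    _ = ∑ j : Fin N → Fin 2, ∑ s : Fin 2, (if j i = 0 then G (Function.update j i s) else 0) :=
        Finset.sum_comm
    _ = _ := by
        refine Finset.sum_congr rfl fun j _ => ?_
        by_cases h : j i = 0 <;> simp [h]

lemma qrdm_eq (ψ : (Fin N → Fin 2) → ℂ) (i : Fin N) (k l : Fin 2) :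
    qrdm ψ i k l = ∑ j : Fin N → Fin 2,
      if j i = 0 then ψ (Function.update j i k) * conj' (ψ (Function.update j i l)) else 0 := by
  rw [qrdm, sum_slice i k]
  refine Finset.sum_congr rfl fun j _ => ?_
  by_cases h : j i = 0 <;> simp [h, Function.update_idem]

lemma qrdm_isHermitian (ψ : (Fin N → Fin 2) → ℂ) (i : Fin N) : (qrdm ψ i).IsHermitian := by
  ext k l
  simp only [Matrix.conjTranspose_apply, qrdm_eq, RCLike.star_def, map_sum]
  refine Finset.sum_congr rfl fun j _ => ?_
  by_cases h : j i = 0 <;> simp [h, mul_comm]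

noncomputable def act (g : Fin N → Matrix (Fin 2) (Fin 2) ℂ) (ψ : (Fin N → Fin 2) → ℂ) :
    (Fin N → Fin 2) → ℂ :=
  fun j => ∑ m : Fin N → Fin 2, (∏ i, g i (j i) (m i)) * ψ m

lemma act_smul (g : Fin N → Matrix (Fin 2) (Fin 2) ℂ) (c : ℂ) (ψ : (Fin N → Fin 2) → ℂ) :
    act g (fun j => c * ψ j) = fun j => c * act g ψ j := by
  funext j
  simp only [act, Finset.mul_sum]
  exact Finset.sum_congr rfl fun m _ => by ring

lemma act_act (g h : Fin N → Matrix (Fin 2) (Fin 2) ℂ) (ψ : (Fin N → Fin 2) → ℂ) :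
    act g (act h ψ) = act (fun i => g i * h i) ψ := by
  funext j
  simp only [act, Finset.mul_sum]
  rw [Finset.sum_comm]
  refine Finset.sum_congr rfl fun p _ => ?_
  have h1 : ∀ m : Fin N → Fin 2,
      (∏ i, g i (j i) (m i)) * ((∏ i, h i (m i) (p i)) * ψ p)
        = (∏ i, g i (j i) (m i) * h i (m i) (p i)) * ψ p := by
    intro m; rw [Finset.prod_mul_distrib]; ring
  rw [Finset.sum_congr rfl fun m _ => h1 m, ← Finset.sum_mul]
  congr 1
  rw [← Fintype.prod_sum fun i s => g i (j i) s * h i s (p i)]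
  exact Finset.prod_congr rfl fun i _ => (Matrix.mul_apply).symm

lemma qrdm_act (u : Fin N → Matrix (Fin 2) (Fin 2) ℂ) (hu : ∀ t, (u t)ᴴ * u t = 1)
    (ψ : (Fin N → Fin 2) → ℂ) (i : Fin N) :
    qrdm (act u ψ) i = u i * qrdm ψ i * (u i)ᴴ := by
  classical
  ext k l
  set T : ℂ := ∑ m : Fin N → Fin 2, (if m i = 0 then
      ∑ a : Fin 2, ∑ b : Fin 2,
        u i k a * conj' (u i l b) * (ψ (Function.update m i a) * conj' (ψ (Function.update m i b)))
      else 0) with hT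
  have hRHS : (u i * qrdm ψ i * (u i)ᴴ) k l = T := by
    simp only [Matrix.mul_apply, Matrix.conjTranspose_apply, qrdm_eq, RCLike.star_def]
    calc ∑ b : Fin 2, (∑ a : Fin 2, u i k a * ∑ m : Fin N → Fin 2,
          (if m i = 0 then ψ (Function.update m i a) * conj' (ψ (Function.update m i b)) else 0))
          * conj' (u i l b)
        = ∑ b : Fin 2, ∑ a : Fin 2, ∑ m : Fin N → Fin 2,
            (if m i = 0 then u i k a * conj' (u i l b)
              * (ψ (Function.update m i a) * conj' (ψ (Function.update m i b))) else 0) := by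
          refine Finset.sum_congr rfl fun b _ => ?_
          rw [Finset.sum_mul]
          refine Finset.sum_congr rfl fun a _ => ?_
          rw [Finset.mul_sum, Finset.sum_mul]
          refine Finset.sum_congr rfl fun m _ => ?_
          by_cases h : m i = 0
          · simp only [h, if_true]; ring
          · simp [h]
      _ = T := by
          rw [hT, Finset.sum_comm]
          rw [show (∑ a : Fin 2, ∑ b : Fin 2, ∑ m : Fin N → Fin 2,
            (if m i = 0 then u i k a * conj' (u i l b)
              * (ψ (Function.update m i a) * conj' (ψ (Function.update m i b))) else 0)) =
            ∑ a : Fin 2, ∑ m : Fin N → Fin 2, ∑ b : Fin 2,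
            (if m i = 0 then u i k a * conj' (u i l b)
              * (ψ (Function.update m i a) * conj' (ψ (Function.update m i b))) else 0) from
            Finset.sum_congr rfl fun a _ => Finset.sum_comm]
          rw [Finset.sum_comm]
          refine Finset.sum_congr rfl fun m _ => ?_
          by_cases h : m i = 0 <;> simp [h]
  rw [hRHS, hT]
  set f : (Fin N → Fin 2) → (Fin N → Fin 2) → Fin N → Fin 2 → ℂ :=
    fun m m' t s => if t = i then (if s = 0 then u i k (m i) * conj' (u i l (m' i)) else 0)
      else u t s (m t) * conj' (u t s (m' t)) with hf
  have claim1 : ∀ j : Fin N → Fin 2,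
      (if j i = 0 then
        act u ψ (Function.update j i k) * conj' (act u ψ (Function.update j i l)) else 0)
      = ∑ m : Fin N → Fin 2, ∑ m' : Fin N → Fin 2,
          (∏ t, f m m' t (j t)) * (ψ m * conj' (ψ m')) := by
    intro j
    by_cases h : j i = 0
    · rw [if_pos h]
      have e2 : conj' (act u ψ (Function.update j i l))
          = ∑ m' : Fin N → Fin 2,
              conj' (∏ t, u t (Function.update j i l t) (m' t)) * conj' (ψ m') := by
        rw [show act u ψ (Function.update j i l)
            = ∑ m' : Fin N → Fin 2, (∏ t, u t (Function.update j i l t) (m' t)) * ψ m' from rfl,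
          map_sum]
        exact Finset.sum_congr rfl fun m' _ => map_mul _ _ _
      rw [show act u ψ (Function.update j i k)
          = ∑ m : Fin N → Fin 2, (∏ t, u t (Function.update j i k t) (m t)) * ψ m from rfl,
        e2, Finset.sum_mul_sum]
      refine Finset.sum_congr rfl fun m _ => Finset.sum_congr rfl fun m' _ => ?_
      rw [map_prod]
      have hprod : (∏ t, u t (Function.update j i k t) (m t))
          * (∏ t, conj' (u t (Function.update j i l t) (m' t)))
          = ∏ t, f m m' t (j t) := by
        rw [← Finset.prod_mul_distrib]
        refine Finset.prod_congr rfl fun t _ => ?_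
        by_cases ht : t = i
        · subst ht; simp [hf, h]
        · simp [hf, ht, Function.update_of_ne ht]
      calc (∏ t, u t (Function.update j i k t) (m t)) * ψ m
            * ((∏ t, conj' (u t (Function.update j i l t) (m' t))) * conj' (ψ m'))
          = ((∏ t, u t (Function.update j i k t) (m t))
              * (∏ t, conj' (u t (Function.update j i l t) (m' t)))) * (ψ m * conj' (ψ m')) := by
            ring
        _ = _ := by rw [hprod]
    · rw [if_neg h]
      symm
      refine Finset.sum_eq_zero fun m _ => Finset.sum_eq_zero fun m' _ => ?_
      have hz : f m m' i (j i) = 0 := by simp [hf, h]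
      rw [Finset.prod_eq_zero (Finset.mem_univ i) hz, zero_mul]
  have key : ∀ m m' : Fin N → Fin 2, (∑ j : Fin N → Fin 2, ∏ t, f m m' t (j t))
      = (u i k (m i) * conj' (u i l (m' i)))
        * (if ∀ t, t ≠ i → m' t = m t then 1 else 0) := by
    intro m m'
    rw [← Fintype.prod_sum (fun t s => f m m' t s)]
    rw [← Finset.mul_prod_erase Finset.univ (fun t => ∑ s : Fin 2, f m m' t s)
      (Finset.mem_univ i)]
    have h1 : (∑ s : Fin 2, f m m' i s) = u i k (m i) * conj' (u i l (m' i)) := by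
      simp [hf, Fin.sum_univ_two]
    have h2 : ∏ t ∈ Finset.univ.erase i, (∑ s : Fin 2, f m m' t s)
        = if ∀ t, t ≠ i → m' t = m t then 1 else 0 := by
      have h3 : ∀ t ∈ Finset.univ.erase i, (∑ s : Fin 2, f m m' t s)
          = if m' t = m t then 1 else 0 := by
        intro t ht
        have hti : t ≠ i := Finset.ne_of_mem_erase ht
        have h4 : (∑ s : Fin 2, f m m' t s) = ((u t)ᴴ * u t) (m' t) (m t) := by
          simp [hf, hti, Matrix.mul_apply, Matrix.conjTranspose_apply, RCLike.star_def,
            mul_comm]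
        rw [h4, hu t, Matrix.one_apply]
      rw [Finset.prod_congr rfl h3, Finset.prod_boole]
      congr 1
      simp only [eq_iff_iff]
      constructor
      · intro H t ht; exact H t (by simp [ht])
      · intro H t ht; exact H t (Finset.ne_of_mem_erase ht)
    rw [h1, h2]
  calc qrdm (act u ψ) i k l
      = ∑ j : Fin N → Fin 2, ∑ m : Fin N → Fin 2, ∑ m' : Fin N → Fin 2,
          (∏ t, f m m' t (j t)) * (ψ m * conj' (ψ m')) := by
        rw [qrdm_eq]; exact Finset.sum_congr rfl fun j _ => claim1 j
    _ = ∑ m : Fin N → Fin 2, ∑ m' : Fin N → Fin 2,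
          (∑ j : Fin N → Fin 2, ∏ t, f m m' t (j t)) * (ψ m * conj' (ψ m')) := by
        rw [Finset.sum_comm]
        refine Finset.sum_congr rfl fun m _ => ?_
        rw [Finset.sum_comm]
        exact Finset.sum_congr rfl fun m' _ => (Finset.sum_mul _ _ _).symm
    _ = ∑ m : Fin N → Fin 2, ∑ m' : Fin N → Fin 2,
          (u i k (m i) * conj' (u i l (m' i)))
            * (if ∀ t, t ≠ i → m' t = m t then 1 else 0) * (ψ m * conj' (ψ m')) := by
        exact Finset.sum_congr rfl fun m _ => Finset.sum_congr rfl fun m' _ => by rw [key]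
    _ = ∑ m : Fin N → Fin 2, ∑ m' : Fin N → Fin 2,
          (if m' i = 0 then ∑ b : Fin 2,
            (u i k (m i) * conj' (u i l (Function.update m' i b i)))
              * (if ∀ t, t ≠ i → Function.update m' i b t = m t then 1 else 0)
              * (ψ m * conj' (ψ (Function.update m' i b))) else 0) := by
        exact Finset.sum_congr rfl fun m _ => sum_split i
          (fun m' => (u i k (m i) * conj' (u i l (m' i)))
            * (if ∀ t, t ≠ i → m' t = m t then 1 else 0) * (ψ m * conj' (ψ m')))
    _ = ∑ m : Fin N → Fin 2, ∑ m' : Fin N → Fin 2,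
          (if m' = Function.update m i 0 then
            ∑ b : Fin 2, u i k (m i) * conj' (u i l b)
              * (ψ m * conj' (ψ (Function.update m' i b))) else 0) := by
        refine Finset.sum_congr rfl fun m _ => Finset.sum_congr rfl fun m' _ => ?_
        by_cases hm : m' = Function.update m i 0
        · have hmi : m' i = 0 := by rw [hm]; exact Function.update_self i 0 m
          rw [if_pos hmi, if_pos hm]
          refine Finset.sum_congr rfl fun b _ => ?_
          have hcond : ∀ t, t ≠ i → Function.update m' i b t = m t := by
            intro t ht
            rw [Function.update_of_ne ht, hm, Function.update_of_ne ht]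
          rw [if_pos hcond, Function.update_self, mul_one]
        · rw [if_neg hm]
          by_cases hmi : m' i = 0
          · rw [if_pos hmi]
            have hcond : ¬ (∀ t, t ≠ i → m' t = m t) := by
              intro H
              apply hm
              funext t
              by_cases ht : t = i
              · subst ht; rw [Function.update_self]; exact hmi
              · rw [Function.update_of_ne ht]; exact H t ht
            refine Finset.sum_eq_zero fun b _ => ?_
            have hc2 : ¬ (∀ t, t ≠ i → Function.update m' i b t = m t) := by
              intro H
              exact hcond fun t ht => by
                have := H t ht; rwa [Function.update_of_ne ht] at this
            rw [if_neg hc2, mul_zero, zero_mul]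
          · rw [if_neg hmi]
    _ = ∑ m : Fin N → Fin 2, ∑ b : Fin 2, u i k (m i) * conj' (u i l b)
          * (ψ m * conj' (ψ (Function.update m i b))) := by
        refine Finset.sum_congr rfl fun m _ => ?_
        rw [Finset.sum_ite_eq' Finset.univ (Function.update m i 0)]
        simp only [Finset.mem_univ, if_true]
        exact Finset.sum_congr rfl fun b _ => by rw [Function.update_idem]
    _ = T := by
        rw [hT]
        rw [sum_split i (fun m => ∑ b : Fin 2, u i k (m i) * conj' (u i l b)
          * (ψ m * conj' (ψ (Function.update m i b))))]
        refine Finset.sum_congr rfl fun m _ => ?_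
        by_cases h : m i = 0
        · rw [if_pos h, if_pos h]
          refine Finset.sum_congr rfl fun a _ => Finset.sum_congr rfl fun b _ => ?_
          rw [Function.update_self, Function.update_idem]
        · rw [if_neg h, if_neg h]

/-- trace of reduced density matrix is the squared norm. -/
lemma qrdm_trace (ψ : (Fin N → Fin 2) → ℂ) (i : Fin N) :
    (qrdm ψ i).trace = ∑ j : Fin N → Fin 2, ψ j * conj' (ψ j) := by
  rw [Matrix.trace_fin_two]
  rw [sum_split i (fun j => ψ j * conj' (ψ j)), qrdm_eq, qrdm_eq, ← Finset.sum_add_distrib]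
  refine Finset.sum_congr rfl fun j _ => ?_
  by_cases h : j i = 0
  · rw [if_pos h, if_pos h, if_pos h, Fin.sum_univ_two]
  · rw [if_neg h, if_neg h, if_neg h, add_zero]

/-- QR decomposition for 2×2 complex matrices of determinant 1. -/
lemma qr (g : Matrix (Fin 2) (Fin 2) ℂ) (hg : g.det = 1) :
    ∃ u t : Matrix (Fin 2) (Fin 2) ℂ, uᴴ * u = 1 ∧ t 1 0 = 0 ∧ u * t = g := by
  set a := g 0 0 with ha
  set c := g 1 0 with hc
  have hs : 0 < Complex.normSq a + Complex.normSq c := by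
    rcases (lt_or_eq_of_le (add_nonneg (Complex.normSq_nonneg a) (Complex.normSq_nonneg c))) with h | h
    · exact h
    · exfalso
      have ha0 : a = 0 := by
        have := Complex.normSq_nonneg a
        have := Complex.normSq_nonneg c
        have : Complex.normSq a = 0 := by linarith
        exact Complex.normSq_eq_zero.mp this
      have hc0 : c = 0 := by
        have := Complex.normSq_nonneg a
        have := Complex.normSq_nonneg c
        have : Complex.normSq c = 0 := by linarith
        exact Complex.normSq_eq_zero.mp this
      rw [Matrix.det_fin_two, ← ha, ← hc, ha0, hc0] at hg
      simp at hg
  set n := Real.sqrt (Complex.normSq a + Complex.normSq c) with hndef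
  have hn : 0 < n := Real.sqrt_pos.2 hs
  have hnC : ((n:ℂ)) ≠ 0 := by exact_mod_cast hn.ne'
  have hn2 : (n:ℂ) * (n:ℂ) = ((Complex.normSq a : ℂ)) + ((Complex.normSq c : ℂ)) := by
    rw [← Complex.ofReal_mul, Real.mul_self_sqrt hs.le]
    push_cast
    ring
  set u : Matrix (Fin 2) (Fin 2) ℂ := !![a/n, -(conj' c)/n; c/n, (conj' a)/n] with hudef
  have hn2' : (n:ℂ) * (n:ℂ) = conj' a * a + conj' c * c := by
    rw [hn2, Complex.normSq_eq_conj_mul_self, Complex.normSq_eq_conj_mul_self]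
  have hu : uᴴ * u = 1 := by
    ext i j
    fin_cases i <;> fin_cases j <;>
      simp only [hudef, Matrix.mul_apply, Matrix.conjTranspose_apply, Fin.sum_univ_two,
        Matrix.one_apply, Matrix.cons_val', Matrix.cons_val_zero, Matrix.cons_val_one,
        Matrix.head_cons, Matrix.head_fin_const, Matrix.empty_val', Matrix.cons_val_fin_one,
        Fin.zero_eta, Fin.mk_one, Matrix.of_apply, zero_ne_one, one_ne_zero, if_true, if_false, RCLike.star_def, map_div₀, map_neg, Complex.conj_ofReal,
        _root_.map_mul, RingHomCompTriple.comp_apply, RingHom.id_apply] <;>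
      field_simp <;>
      first
        | (linear_combination (-1 : ℂ) * hn2')
        | linear_combination hn2'
        | ring
  have huu : u * uᴴ = 1 := mul_eq_one_comm.mp hu
  refine ⟨u, uᴴ * g, hu, ?_, by rw [← Matrix.mul_assoc, huu, Matrix.one_mul]⟩
  simp [hudef, Matrix.mul_apply, Matrix.conjTranspose_apply, Fin.sum_univ_two,
    Complex.conj_ofReal, ← ha, ← hc]
  field_simp
  ring

/-- Rayleigh quotient bound: for Hermitian 2×2 ρ and u with orthonormal columns. -/
lemma lmax_ge_ray (ρ u : Matrix (Fin 2) (Fin 2) ℂ) (hherm : ρ.IsHermitian)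
    (hu : uᴴ * u = 1) : ((uᴴ * ρ * u) 0 0).re ≤ lmax ρ := by
  have hρ10 : ρ 1 0 = conj' (ρ 0 1) := by
    have h := congrFun (congrFun hherm 1) 0
    rw [Matrix.conjTranspose_apply] at h
    exact h.symm
  have him0 : (ρ 0 0).im = 0 := by
    have h := congrFun (congrFun hherm 0) 0
    rw [Matrix.conjTranspose_apply] at h
    exact Complex.conj_eq_iff_im.mp h
  have him1 : (ρ 1 1).im = 0 := by
    have h := congrFun (congrFun hherm 1) 1
    rw [Matrix.conjTranspose_apply] at h
    exact Complex.conj_eq_iff_im.mp h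
  set a := (ρ 0 0).re with hadef
  set d := (ρ 1 1).re with hddef
  set b := ρ 0 1 with hbdef
  set nb := Complex.normSq b with hnbdef
  have hρ00 : ρ 0 0 = (a:ℂ) := by
    apply Complex.ext <;> simp [hadef, him0]
  have hρ11 : ρ 1 1 = (d:ℂ) := by
    apply Complex.ext <;> simp [hddef, him1]
  set D := (a - d)^2 + 4*nb with hDdef
  have hD : 0 ≤ D := by
    have := Complex.normSq_nonneg b
    positivity
  have hsq : Real.sqrt D ^ 2 = D := Real.sq_sqrt hD
  set L := (a + d + Real.sqrt D)/2 with hLdef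
  have habs : |a - d| ≤ Real.sqrt D := by
    rw [← Real.sqrt_sq_eq_abs]
    apply Real.sqrt_le_sqrt
    have := Complex.normSq_nonneg b
    nlinarith
  have hLa : a ≤ L := by
    have := abs_le.mp habs
    rw [hLdef]; linarith
  have hLd : d ≤ L := by
    have := abs_le.mp habs
    rw [hLdef]; linarith
  have hkey : (L - a) * (L - d) = nb := by
    have h1 : (L - a) * (L - d) = (Real.sqrt D ^ 2 - (a - d)^2)/4 := by
      rw [hLdef]; ring
    rw [h1, hsq, hDdef]; ring
  have hkeyC : ((L:ℂ) - a) * ((L:ℂ) - d) = (nb:ℂ) := by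
    have := congrArg (fun x : ℝ => (x : ℂ)) hkey
    push_cast at this
    exact this
  -- L is an eigenvalue
  have hmem : Module.End.HasEigenvalue ρ.mulVecLin ((L:ℝ):ℂ) := by
    have hvec : ∃ x : Fin 2 → ℂ, x ≠ 0 ∧ ρ.mulVec x = (L:ℂ) • x := by
      by_cases hb : b = 0
      · have hnb0 : nb = 0 := by rw [hnbdef, hb]; simp
        have : (L - a) * (L - d) = 0 := by rw [hkey, hnb0]
        rcases mul_eq_zero.mp this with h | h
        · have hLa' : (L:ℝ) = a := by linarith
          refine ⟨![1, 0], ?_, ?_⟩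
          · intro h0
            have := congrFun h0 0
            simp at this
          · funext r
            fin_cases r <;>
              simp [Matrix.mulVec, dotProduct, Fin.sum_univ_two, hρ00, hρ10, hb, ← hbdef, hLa']
        · have hLd' : (L:ℝ) = d := by linarith
          refine ⟨![0, 1], ?_, ?_⟩
          · intro h0
            have := congrFun h0 1
            simp at this
          · funext r
            fin_cases r <;>
              simp [Matrix.mulVec, dotProduct, Fin.sum_univ_two, hρ11, hb, ← hbdef, hLd']
      · refine ⟨![b, (L:ℂ) - a], ?_, ?_⟩
        · intro h0
          have := congrFun h0 0
          simp at this
          exact hb this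
        · funext r
          have hcb : conj' b * b = (nb:ℂ) := by
            rw [hnbdef]
            exact (Complex.normSq_eq_conj_mul_self).symm
          fin_cases r
          · simp [Matrix.mulVec, dotProduct, Fin.sum_univ_two, hρ00, ← hbdef]
            ring
          · simp [Matrix.mulVec, dotProduct, Fin.sum_univ_two, hρ11, hρ10, ← hbdef]
            linear_combination hcb - hkeyC
    obtain ⟨x, hx0, hx⟩ := hvec
    exact Module.End.hasEigenvalue_of_hasEigenvector
      ⟨Module.End.mem_eigenspace_iff.2 (by rw [Matrix.mulVecLin_apply]; exact hx), hx0⟩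
  -- the set of real eigenvalues is bounded above by L
  have hbdd : BddAbove {r : ℝ | Module.End.HasEigenvalue ρ.mulVecLin ((r:ℂ))} := by
    refine ⟨L, fun r hr => ?_⟩
    obtain ⟨x, hx⟩ := hr.exists_hasEigenvector
    have hx0 : x ≠ 0 := hx.2
    have hxe : ρ.mulVec x = ((r:ℝ):ℂ) • x := by
      have := Module.End.mem_eigenspace_iff.1 hx.1
      rwa [Matrix.mulVecLin_apply] at this
    have e0 : ρ 0 0 * x 0 + ρ 0 1 * x 1 = (r:ℂ) * x 0 := by
      have := congrFun hxe 0
      simpa [Matrix.mulVec, dotProduct, Fin.sum_univ_two, smul_eq_mul] using this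
    have e1 : ρ 1 0 * x 0 + ρ 1 1 * x 1 = (r:ℂ) * x 1 := by
      have := congrFun hxe 1
      simpa [Matrix.mulVec, dotProduct, Fin.sum_univ_two, smul_eq_mul] using this
    rw [hρ00] at e0
    rw [hρ10, hρ11] at e1
    have hcb : conj' b * b = (nb:ℂ) := (Complex.normSq_eq_conj_mul_self).symm
    have hq : (((a:ℂ) - r) * ((r:ℂ) - d) + (nb:ℂ)) * x 1 = 0 := by
      linear_combination conj' b * e0 - ((a:ℂ) - r) * e1 - x 1 * hcb
    rcases mul_eq_zero.mp hq with h | h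
    · have hre : (a - r) * (r - d) + nb = 0 := by
        have : ((((a - r) * (r - d) + nb : ℝ)):ℂ) = 0 := by push_cast; linear_combination h
        exact_mod_cast this
      set s := Real.sqrt D with hsdef
      have hzero : (2*r - a - d - s) * (2*r - a - d + s) = 0 := by
        have hs2 : s^2 = D := hsq
        rw [hDdef] at hs2
        nlinarith [hre, hs2]
      rcases mul_eq_zero.mp hzero with h2 | h2
      · have : 2*r - a - d = s := by linarith
        have hs0 : 0 ≤ s := Real.sqrt_nonneg D
        rw [hLdef]; linarith
      · have : 2*r - a - d = -s := by linarith
        have hs0 : 0 ≤ s := Real.sqrt_nonneg D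
        rw [hLdef]; linarith
    · -- x 1 = 0
      have hx00 : x 0 ≠ 0 := by
        intro h0
        apply hx0
        funext w
        fin_cases w
        · exact h0
        · exact h
      have : ((a:ℂ) - r) * x 0 = 0 := by
        rw [h] at e0
        linear_combination e0
      have har : (a:ℂ) = (r:ℂ) := by
        rcases mul_eq_zero.mp this with h3 | h3
        · exact sub_eq_zero.mp h3
        · exact absurd h3 hx00
      have : a = r := by exact_mod_cast har
      linarith
  -- Rayleigh quotient
  set v0 := u 0 0 with hv0
  set v1 := u 1 0 with hv1
  have hvnorm : Complex.normSq v0 + Complex.normSq v1 = 1 := by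
    have h00 : (uᴴ * u) 0 0 = 1 := by rw [hu]; simp
    rw [Matrix.mul_apply, Fin.sum_univ_two] at h00
    simp only [Matrix.conjTranspose_apply] at h00
    have : ((Complex.normSq v0 + Complex.normSq v1 : ℝ):ℂ) = 1 := by
      push_cast
      rw [Complex.normSq_eq_conj_mul_self, Complex.normSq_eq_conj_mul_self]
      simpa [RCLike.star_def, hv0, hv1] using h00
    exact_mod_cast this
  have hray : (uᴴ * ρ * u) 0 0
      = conj' v0 * ρ 0 0 * v0 + conj' v0 * b * v1 + conj' v1 * conj' b * v0
        + conj' v1 * ρ 1 1 * v1 := by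
    simp only [Matrix.mul_apply, Fin.sum_univ_two, Matrix.conjTranspose_apply,
      RCLike.star_def, hρ10, ← hbdef, ← hv0, ← hv1]
    ring
  have hrayre : ((uᴴ * ρ * u) 0 0).re
      = a * Complex.normSq v0 + d * Complex.normSq v1 + 2 * (conj' v0 * b * v1).re := by
    rw [hray, hρ00, hρ11]
    have h1 : conj' v0 * (a:ℂ) * v0 = ((a * Complex.normSq v0 : ℝ):ℂ) := by
      push_cast
      rw [Complex.normSq_eq_conj_mul_self]
      ring
    have h2 : conj' v1 * (d:ℂ) * v1 = ((d * Complex.normSq v1 : ℝ):ℂ) := by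
      push_cast
      rw [Complex.normSq_eq_conj_mul_self]
      ring
    have h3 : conj' v1 * conj' b * v0 = conj' (conj' v0 * b * v1) := by
      simp only [_root_.map_mul, Complex.conj_conj]
      ring
    rw [h1, h2, h3]
    simp [Complex.add_re, Complex.ofReal_re, Complex.conj_re]
    ring
  have hcross : (conj' v0 * b * v1).re ≤ ‖v0‖ * ‖b‖ * ‖v1‖ := by
    calc (conj' v0 * b * v1).re ≤ ‖conj' v0 * b * v1‖ := Complex.re_le_norm _
      _ = ‖v0‖ * ‖b‖ * ‖v1‖ := by
        simp only [norm_mul, Complex.norm_conj]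
  have hRL : ((uᴴ * ρ * u) 0 0).re ≤ L := by
    rw [hrayre]
    set x := ‖v0‖ with hx
    set y := ‖v1‖ with hy
    have hnx : Complex.normSq v0 = x^2 := by rw [hx, ← Complex.sq_norm]
    have hny : Complex.normSq v1 = y^2 := by rw [hy, ← Complex.sq_norm]
    have habsb : ‖b‖ = Real.sqrt (L-a) * Real.sqrt (L-d) := by
      rw [← Real.sqrt_mul (by linarith) , hkey]
      rw [hnbdef, Complex.norm_def]
    have hx0 : 0 ≤ x := norm_nonneg _
    have hy0 : 0 ≤ y := norm_nonneg _
    have hsa : Real.sqrt (L-a) ^ 2 = L - a := Real.sq_sqrt (by linarith)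
    have hsd : Real.sqrt (L-d) ^ 2 = L - d := Real.sq_sqrt (by linarith)
    have hamgm : 2 * (Real.sqrt (L-a) * Real.sqrt (L-d) * (x*y)) ≤ (L-a)*x^2 + (L-d)*y^2 := by
      nlinarith [sq_nonneg (Real.sqrt (L-a) * x - Real.sqrt (L-d) * y)]
    have h2 : 2 * (conj' v0 * b * v1).re ≤ (L-a)*x^2 + (L-d)*y^2 := by
      have := hcross
      rw [habsb] at this
      nlinarith
    have hxy1 : x^2 + y^2 = 1 := by rw [← hnx, ← hny]; exact hvnorm
    rw [hnx, hny]
    have h4 : (L - a) * x ^ 2 + (L - d) * y ^ 2 = L - a * x^2 - d * y^2 := by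
      linear_combination L * hxy1
    linarith [h2, h4]
  have hlm : lmax ρ = sSup {r : ℝ | Module.End.HasEigenvalue ρ.mulVecLin ((r:ℂ))} := rfl
  calc ((uᴴ * ρ * u) 0 0).re ≤ L := hRL
    _ ≤ lmax ρ := by rw [hlm]; exact le_csSup hbdd hmem

/-- Rayleigh entries are close when matrix entries are close. -/
lemma ray_entry_diff (A B u : Matrix (Fin 2) (Fin 2) ℂ) (hu : uᴴ * u = 1) (c : ℝ)
    (h : ∀ k l, ‖A k l - B k l‖ ≤ c) :
    ((uᴴ * B * u) 0 0).re ≤ ((uᴴ * A * u) 0 0).re + 4 * c := by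
  have hvnorm : Complex.normSq (u 0 0) + Complex.normSq (u 1 0) = 1 := by
    have h00 : (uᴴ * u) 0 0 = 1 := by rw [hu]; simp
    rw [Matrix.mul_apply, Fin.sum_univ_two] at h00
    simp only [Matrix.conjTranspose_apply] at h00
    have : ((Complex.normSq (u 0 0) + Complex.normSq (u 1 0) : ℝ):ℂ) = 1 := by
      push_cast
      rw [Complex.normSq_eq_conj_mul_self, Complex.normSq_eq_conj_mul_self]
      simpa [RCLike.star_def] using h00
    exact_mod_cast this
  have habs : ∀ k : Fin 2, ‖u k 0‖ ≤ 1 := by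
    intro k
    have n0 := Complex.normSq_nonneg (u 0 0)
    have n1 := Complex.normSq_nonneg (u 1 0)
    have h1 : Complex.normSq (u k 0) ≤ 1 := by
      fin_cases k
      · show Complex.normSq (u 0 0) ≤ 1
        linarith
      · show Complex.normSq (u 1 0) ≤ 1
        linarith
    have h2 : ‖u k 0‖ ^ 2 ≤ 1 := by rwa [Complex.sq_norm]
    nlinarith [norm_nonneg (u k 0)]
  have hc0 : 0 ≤ c := le_trans (norm_nonneg _) (h 0 0)
  have hterm : ∀ k l : Fin 2, ‖(starRingEnd ℂ) (u k 0) * (A k l - B k l) * u l 0‖ ≤ c := by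
    intro k l
    rw [norm_mul, norm_mul, Complex.norm_conj]
    have step1 : ‖u k 0‖ * ‖A k l - B k l‖ ≤ 1 * c :=
      mul_le_mul (habs k) (h k l) (norm_nonneg _) zero_le_one
    calc ‖u k 0‖ * ‖A k l - B k l‖ * ‖u l 0‖
        ≤ (1 * c) * 1 :=
          mul_le_mul step1 (habs l) (norm_nonneg _) (by linarith)
      _ = c := by ring
  have hdiff : (uᴴ * A * u) 0 0 - (uᴴ * B * u) 0 0
      = (starRingEnd ℂ) (u 0 0) * (A 0 0 - B 0 0) * u 0 0
        + (starRingEnd ℂ) (u 0 0) * (A 0 1 - B 0 1) * u 1 0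
        + (starRingEnd ℂ) (u 1 0) * (A 1 0 - B 1 0) * u 0 0
        + (starRingEnd ℂ) (u 1 0) * (A 1 1 - B 1 1) * u 1 0 := by
    simp only [Matrix.mul_apply, Fin.sum_univ_two, Matrix.conjTranspose_apply, RCLike.star_def]
    ring
  have habsd : ‖(uᴴ * A * u) 0 0 - (uᴴ * B * u) 0 0‖ ≤ 4 * c := by
    rw [hdiff]
    calc ‖_‖
        ≤ ‖(starRingEnd ℂ) (u 0 0) * (A 0 0 - B 0 0) * u 0 0
            + (starRingEnd ℂ) (u 0 0) * (A 0 1 - B 0 1) * u 1 0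
            + (starRingEnd ℂ) (u 1 0) * (A 1 0 - B 1 0) * u 0 0‖
          + ‖(starRingEnd ℂ) (u 1 0) * (A 1 1 - B 1 1) * u 1 0‖ := norm_add_le _ _
      _ ≤ ‖(starRingEnd ℂ) (u 0 0) * (A 0 0 - B 0 0) * u 0 0
            + (starRingEnd ℂ) (u 0 0) * (A 0 1 - B 0 1) * u 1 0‖
          + ‖(starRingEnd ℂ) (u 1 0) * (A 1 0 - B 1 0) * u 0 0‖
          + ‖(starRingEnd ℂ) (u 1 0) * (A 1 1 - B 1 1) * u 1 0‖ := by
            have := norm_add_le ((starRingEnd ℂ) (u 0 0) * (A 0 0 - B 0 0) * u 0 0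
              + (starRingEnd ℂ) (u 0 0) * (A 0 1 - B 0 1) * u 1 0)
              ((starRingEnd ℂ) (u 1 0) * (A 1 0 - B 1 0) * u 0 0)
            linarith
      _ ≤ ‖(starRingEnd ℂ) (u 0 0) * (A 0 0 - B 0 0) * u 0 0‖
          + ‖(starRingEnd ℂ) (u 0 0) * (A 0 1 - B 0 1) * u 1 0‖
          + ‖(starRingEnd ℂ) (u 1 0) * (A 1 0 - B 1 0) * u 0 0‖
          + ‖(starRingEnd ℂ) (u 1 0) * (A 1 1 - B 1 1) * u 1 0‖ := by
            have := norm_add_le ((starRingEnd ℂ) (u 0 0) * (A 0 0 - B 0 0) * u 0 0)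
              ((starRingEnd ℂ) (u 0 0) * (A 0 1 - B 0 1) * u 1 0)
            linarith
      _ ≤ c + c + c + c := by
            have := hterm 0 0; have := hterm 0 1; have := hterm 1 0; have := hterm 1 1
            linarith
      _ = 4 * c := by ring
  have hre : |((uᴴ * A * u) 0 0 - (uᴴ * B * u) 0 0).re| ≤ 4 * c :=
    le_trans (Complex.abs_re_le_norm _) habsd
  rw [Complex.sub_re] at hre
  have := abs_le.mp hre
  linarith [this.1]

/-- The reduced density matrices of nearby states are entrywise close. -/
lemma qrdm_close (ψ φ : (Fin N → Fin 2) → ℂ) (ε : ℝ) (hε : 0 ≤ ε)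
    (h1 : ∀ j, ‖ψ j‖ ≤ 1) (h2 : ∀ j, ‖φ j‖ ≤ 2)
    (h3 : ∀ j, ‖ψ j - φ j‖ ≤ ε) (i : Fin N) (k l : Fin 2) :
    ‖qrdm ψ i k l - qrdm φ i k l‖ ≤ 2^N * (3*ε) := by
  rw [qrdm, qrdm, ← Finset.sum_sub_distrib]
  calc ‖∑ j : Fin N → Fin 2, _‖
      ≤ ∑ j : Fin N → Fin 2,
          ‖(if j i = k then ψ j * conj' (ψ (Function.update j i l)) else 0)
            - (if j i = k then φ j * conj' (φ (Function.update j i l)) else 0)‖ :=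
        norm_sum_le _ _
    _ ≤ ∑ _j : Fin N → Fin 2, (3*ε) := by
        refine Finset.sum_le_sum fun j _ => ?_
        by_cases h : j i = k
        · rw [if_pos h, if_pos h]
          have key : ψ j * conj' (ψ (Function.update j i l))
              - φ j * conj' (φ (Function.update j i l))
              = (ψ j - φ j) * conj' (ψ (Function.update j i l))
                + φ j * (conj' (ψ (Function.update j i l)) - conj' (φ (Function.update j i l))) := by
            ring
          rw [key]
          calc ‖_‖
              ≤ ‖(ψ j - φ j) * conj' (ψ (Function.update j i l))‖
                + ‖φ j * (conj' (ψ (Function.update j i l))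
                  - conj' (φ (Function.update j i l)))‖ := norm_add_le _ _
            _ ≤ ε * 1 + 2 * ε := by
                have e1 : ‖(ψ j - φ j) * conj' (ψ (Function.update j i l))‖
                    ≤ ε * 1 := by
                  rw [norm_mul, Complex.norm_conj]
                  have := h3 j; have := h1 (Function.update j i l)
                  have := norm_nonneg (ψ j - φ j)
                  have := norm_nonneg (ψ (Function.update j i l))
                  nlinarith
                have e2 : ‖φ j * (conj' (ψ (Function.update j i l))
                    - conj' (φ (Function.update j i l)))‖ ≤ 2 * ε := by
                  rw [norm_mul, ← map_sub, Complex.norm_conj]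
                  have := h2 j; have := h3 (Function.update j i l)
                  have := norm_nonneg (φ j)
                  have := norm_nonneg (ψ (Function.update j i l) - φ (Function.update j i l))
                  nlinarith
                linarith
            _ ≤ 3*ε := by linarith
        · rw [if_neg h, if_neg h]
          simpa using by linarith
    _ = 2^N * (3*ε) := by
        rw [Finset.sum_const, Finset.card_univ]
        have : Fintype.card (Fin N → Fin 2) = 2^N := by simp
        rw [this, nsmul_eq_mul]
        push_cast
        ring

/-- support of the triangular-deformed Dicke state has weight at most M. -/
lemma act_dicke_support (Mv : ℕ) (t : Fin N → Matrix (Fin 2) (Fin 2) ℂ)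
    (ht : ∀ i, t i 1 0 = 0) (c : ℂ) (j : Fin N → Fin 2)
    (hj : c * act t (dicke N Mv) j ≠ 0) :
    (Finset.univ.filter fun i => j i = 1).card ≤ Mv := by
  have hne : act t (dicke N Mv) j ≠ 0 := fun h => hj (by rw [h, mul_zero])
  obtain ⟨m, -, hm⟩ := Finset.exists_ne_zero_of_sum_ne_zero hne
  have hdm : dicke N Mv m ≠ 0 := fun h => hm (by rw [h, mul_zero])
  have hcard : (Finset.univ.filter fun i => m i = 1).card = Mv := by
    by_contra h
    exact hdm (by simp [dicke, h])
  have hprodne : (∏ i, t i (j i) (m i)) ≠ 0 := fun h => hm (by rw [h, zero_mul])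
  have hfac : ∀ i, t i (j i) (m i) ≠ 0 := by
    intro i
    exact Finset.prod_ne_zero_iff.mp hprodne i (Finset.mem_univ i)
  have hsub : (Finset.univ.filter fun i => j i = 1) ⊆ (Finset.univ.filter fun i => m i = 1) := by
    intro i hi
    rw [Finset.mem_filter] at hi ⊢
    refine ⟨Finset.mem_univ i, ?_⟩
    by_contra hmi
    have hm0 : m i = 0 := by
      have : ∀ x : Fin 2, x ≠ 1 → x = 0 := by decide
      exact this _ hmi
    exact hfac i (by rw [hi.2, hm0, ht i])
  calc (Finset.univ.filter fun i => j i = 1).card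
      ≤ (Finset.univ.filter fun i => m i = 1).card := Finset.card_le_card hsub
    _ = Mv := hcard

/-- lower bound for the sum of (0,0) diagonal entries via the weight of the support. -/
lemma sum_diag (χ : (Fin N → Fin 2) → ℂ) (Mv : ℕ)
    (hsupp : ∀ j, χ j ≠ 0 → (Finset.univ.filter fun i => j i = 1).card ≤ Mv) :
    ((N:ℝ) - Mv) * ∑ j : Fin N → Fin 2, Complex.normSq (χ j)
      ≤ ∑ i : Fin N, (qrdm χ i 0 0).re := by
  have h00 : ∀ i : Fin N, (qrdm χ i 0 0).re
      = ∑ j : Fin N → Fin 2, (if j i = 0 then Complex.normSq (χ j) else 0) := by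
    intro i
    rw [qrdm, Complex.re_sum]
    refine Finset.sum_congr rfl fun j _ => ?_
    by_cases h : j i = 0
    · rw [if_pos h, if_pos h]
      have : Function.update j i (0:Fin 2) = j := by
        rw [← h]; exact Function.update_eq_self i j
      rw [this, Complex.mul_conj, Complex.ofReal_re]
    · rw [if_neg h, if_neg h, Complex.zero_re]
  calc ((N:ℝ) - Mv) * ∑ j : Fin N → Fin 2, Complex.normSq (χ j)
      = ∑ j : Fin N → Fin 2, ((N:ℝ) - Mv) * Complex.normSq (χ j) := Finset.mul_sum _ _ _
    _ ≤ ∑ j : Fin N → Fin 2,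
          ((Finset.univ.filter fun i => j i = 0).card : ℝ) * Complex.normSq (χ j) := by
        refine Finset.sum_le_sum fun j _ => ?_
        by_cases hz : χ j = 0
        · simp [hz]
        · have hw := hsupp j hz
          have hcards : (Finset.univ.filter fun i => j i = 0).card
              + (Finset.univ.filter fun i => j i = 1).card = N := by
            have h1 : ∀ i : Fin N, ¬ (j i = 0) ↔ j i = 1 := by
              intro i
              constructor
              · intro h; have : ∀ x : Fin 2, x ≠ 0 → x = 1 := by decide
                exact this _ h
              · intro h h0; rw [h0] at h; exact absurd h (by decide)
            have hnegeq : (Finset.filter (fun a : Fin N => ¬ j a = 0) Finset.univ)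
                = (Finset.filter (fun i : Fin N => j i = 1) Finset.univ) :=
              Finset.filter_congr (fun x _ => h1 x)
            have h4 := Finset.card_filter_add_card_filter_not
              (s := (Finset.univ : Finset (Fin N))) (p := fun i : Fin N => j i = 0)
            rw [hnegeq] at h4
            simpa using h4
          have hge : ((N:ℝ) - Mv)
              ≤ ((Finset.univ.filter fun i => j i = 0).card : ℝ) := by
            have h2 : ((Finset.univ.filter fun i => j i = 1).card : ℝ) ≤ Mv := by
              exact_mod_cast hw
            have h3 : ((Finset.univ.filter fun i => j i = 0).card : ℝ)
                + ((Finset.univ.filter fun i => j i = 1).card : ℝ) = N := by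
              exact_mod_cast hcards
            linarith
          exact mul_le_mul_of_nonneg_right hge (Complex.normSq_nonneg _)
    _ = ∑ j : Fin N → Fin 2, ∑ i : Fin N, (if j i = 0 then Complex.normSq (χ j) else 0) := by
        refine Finset.sum_congr rfl fun j _ => ?_
        rw [← Finset.sum_filter, Finset.sum_const, nsmul_eq_mul]
    _ = ∑ i : Fin N, (qrdm χ i 0 0).re := by
        rw [Finset.sum_comm]
        exact Finset.sum_congr rfl fun i _ => (h00 i).symm

end DickeAux

/-- Every normalized state in the SLOCC orbit closure of the Dicke state `|M,N⟩`
(with `2M < N`) satisfies `∑ᵢ λ_max(ρ⁽ⁱ⁾) ≥ N − M`. -/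
theorem dicke_orbit_closure_eigenvalue_bound (N M : ℕ) (hMN : 2 * M < N)
    (ψ : (Fin N → Fin 2) → ℂ)
    (hnorm : ∑ j : Fin N → Fin 2, ‖ψ j‖ ^ 2 = 1)
    (hmem : ψ ∈ closure (qcone (dicke N M))) :
    (N : ℝ) - M ≤ ∑ i : Fin N, lmax (qrdm ψ i) := by
  classical
  have hN0 : 0 < N := by omega
  have hMN' : (M:ℝ) ≤ (N:ℝ) := by exact_mod_cast (by omega : M ≤ N)
  have habs1 : ∀ j, ‖ψ j‖ ≤ 1 := by
    intro j
    have hle : ‖ψ j‖^2 ≤ 1 := by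
      rw [← hnorm]
      exact Finset.single_le_sum (f := fun j => ‖ψ j‖^2)
        (fun _ _ => sq_nonneg _) (Finset.mem_univ j)
    nlinarith [norm_nonneg (ψ j)]
  have main : ∀ ε : ℝ, 0 < ε → ε ≤ 1 →
      (N:ℝ) - M ≤ (∑ i : Fin N, lmax (qrdm ψ i)) + (15 * N * 2^N) * ε := by
    intro ε hε hε1
    obtain ⟨φ, hφmem, hφdist⟩ := Metric.mem_closure_iff.mp hmem ε hε
    obtain ⟨c, g, hφeq⟩ := hφmem
    have hdist : ∀ j, ‖ψ j - φ j‖ ≤ ε := by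
      intro j
      have h := dist_le_pi_dist ψ φ j
      rw [Complex.dist_eq] at h
      linarith [h, hφdist]
    have habs2 : ∀ j, ‖φ j‖ ≤ 2 := by
      intro j
      have h := norm_add_le (ψ j) (φ j - ψ j)
      rw [add_sub_cancel] at h
      have h2 : ‖φ j - ψ j‖ = ‖ψ j - φ j‖ :=
        norm_sub_rev _ _
      have := habs1 j
      have := hdist j
      linarith
    have hqr : ∀ i : Fin N, ∃ u t : Matrix (Fin 2) (Fin 2) ℂ,
        uᴴ * u = 1 ∧ t 1 0 = 0 ∧ u * t = (g i : Matrix (Fin 2) (Fin 2) ℂ) :=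
      fun i => DickeAux.qr _ (g i).2
    choose u t hu ht hut using hqr
    set χ : (Fin N → Fin 2) → ℂ := fun j => c * DickeAux.act t (dicke N M) j with hχdef
    have hφχ : φ = DickeAux.act u χ := by
      funext j
      have e1 : DickeAux.act u χ j
          = c * DickeAux.act u (DickeAux.act t (dicke N M)) j :=
        congrFun (DickeAux.act_smul u c (DickeAux.act t (dicke N M))) j
      have e2 : DickeAux.act u (DickeAux.act t (dicke N M))
          = DickeAux.act (fun i => u i * t i) (dicke N M) := DickeAux.act_act u t _
      have e3 : (fun i => u i * t i)
          = (fun i => ((g i : Matrix (Fin 2) (Fin 2) ℂ))) := funext fun i => hut i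
      rw [hφeq, e1, e2, e3]
      rfl
    have hsupp : ∀ j, χ j ≠ 0 → (Finset.univ.filter fun i => j i = 1).card ≤ M :=
      fun j hj => DickeAux.act_dicke_support M t ht c j hj
    set i0 : Fin N := ⟨0, hN0⟩ with hi0
    -- equality of norms of χ and φ
    have hnormχφ : ∑ j : Fin N → Fin 2, Complex.normSq (χ j)
        = ∑ j : Fin N → Fin 2, Complex.normSq (φ j) := by
      have h1 : qrdm φ i0 = u i0 * qrdm χ i0 * (u i0)ᴴ := by
        rw [hφχ]; exact DickeAux.qrdm_act u hu χ i0
      have h2 : (qrdm φ i0).trace = (qrdm χ i0).trace := by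
        rw [h1, Matrix.trace_mul_cycle, hu i0, Matrix.one_mul]
      have h3 := DickeAux.qrdm_trace φ i0
      have h4 := DickeAux.qrdm_trace χ i0
      have h5 : ((∑ j : Fin N → Fin 2, Complex.normSq (χ j) : ℝ) : ℂ)
          = ((∑ j : Fin N → Fin 2, Complex.normSq (φ j) : ℝ) : ℂ) := by
        push_cast
        calc (∑ j : Fin N → Fin 2, (Complex.normSq (χ j) : ℂ))
            = ∑ j : Fin N → Fin 2, χ j * (starRingEnd ℂ) (χ j) :=
              Finset.sum_congr rfl fun j _ => by rw [Complex.mul_conj]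
          _ = (qrdm χ i0).trace := h4.symm
          _ = (qrdm φ i0).trace := h2.symm
          _ = ∑ j : Fin N → Fin 2, φ j * (starRingEnd ℂ) (φ j) := h3
          _ = ∑ j : Fin N → Fin 2, (Complex.normSq (φ j) : ℂ) :=
              Finset.sum_congr rfl fun j _ => by rw [Complex.mul_conj]
      exact_mod_cast h5
    -- lower bound for norm of φ
    have hψnorm : ∑ j : Fin N → Fin 2, Complex.normSq (ψ j) = 1 := by
      rw [← hnorm]
      exact Finset.sum_congr rfl fun j _ => (Complex.sq_norm (ψ j)).symm
    have hnormφ : 1 - 2^N * (3*ε) ≤ ∑ j : Fin N → Fin 2, Complex.normSq (φ j) := by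
      have hterm : ∀ j, Complex.normSq (ψ j) - Complex.normSq (φ j) ≤ 3*ε := by
        intro j
        have hx : ‖ψ j‖ ≤ 1 := habs1 j
        have hy : ‖φ j‖ ≤ 2 := habs2 j
        have hd : ‖ψ j - φ j‖ ≤ ε := hdist j
        have htri : ‖ψ j‖ ≤ ‖ψ j - φ j‖ + ‖φ j‖ := by
          have h := norm_add_le (ψ j - φ j) (φ j)
          rw [sub_add_cancel] at h
          exact h
        have h1 : Complex.normSq (ψ j) = ‖ψ j‖^2 := (Complex.sq_norm _).symm
        have h2 : Complex.normSq (φ j) = ‖φ j‖^2 := (Complex.sq_norm _).symm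
        rw [h1, h2]
        nlinarith [norm_nonneg (ψ j), norm_nonneg (φ j),
          norm_nonneg (ψ j - φ j)]
      have hsum : ∑ j : Fin N → Fin 2, (Complex.normSq (ψ j) - Complex.normSq (φ j))
          ≤ ∑ _j : Fin N → Fin 2, (3*ε) := Finset.sum_le_sum fun j _ => hterm j
      rw [Finset.sum_sub_distrib, hψnorm] at hsum
      rw [Finset.sum_const, Finset.card_univ] at hsum
      have hcard : Fintype.card (Fin N → Fin 2) = 2^N := by simp
      rw [hcard, nsmul_eq_mul] at hsum
      push_cast at hsum
      linarith
    -- per site bound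
    have hsite : ∀ i : Fin N, (qrdm χ i 0 0).re - 12 * 2^N * ε ≤ lmax (qrdm ψ i) := by
      intro i
      have h1 : qrdm φ i = u i * qrdm χ i * (u i)ᴴ := by
        rw [hφχ]; exact DickeAux.qrdm_act u hu χ i
      have h2 : ((u i)ᴴ * qrdm φ i * u i) 0 0 = qrdm χ i 0 0 := by
        rw [h1]
        have h2' : (u i)ᴴ * (u i * qrdm χ i * (u i)ᴴ) * u i = qrdm χ i := by
          simp only [← Matrix.mul_assoc]
          rw [hu i, Matrix.one_mul, Matrix.mul_assoc, hu i, Matrix.mul_one]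
        rw [h2']
      have h3 : (((u i)ᴴ * qrdm φ i * u i) 0 0).re
          ≤ (((u i)ᴴ * qrdm ψ i * u i) 0 0).re + 4 * (2^N * (3*ε)) :=
        DickeAux.ray_entry_diff (qrdm ψ i) (qrdm φ i) (u i) (hu i) (2^N*(3*ε))
          (fun k l => DickeAux.qrdm_close ψ φ ε (le_of_lt hε) habs1 habs2 hdist i k l)
      have h4 : (((u i)ᴴ * qrdm ψ i * u i) 0 0).re ≤ lmax (qrdm ψ i) :=
        DickeAux.lmax_ge_ray (qrdm ψ i) (u i) (DickeAux.qrdm_isHermitian ψ i) (hu i)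
      rw [h2] at h3
      nlinarith [h3, h4]
    have hsum1 : ∑ i : Fin N, ((qrdm χ i 0 0).re - 12 * 2^N * ε)
        ≤ ∑ i : Fin N, lmax (qrdm ψ i) := Finset.sum_le_sum fun i _ => hsite i
    rw [Finset.sum_sub_distrib, Finset.sum_const, Finset.card_univ, Fintype.card_fin,
      nsmul_eq_mul] at hsum1
    have hdiag := DickeAux.sum_diag χ M hsupp
    -- combine everything
    have hNM0 : (0:ℝ) ≤ (N:ℝ) - M := by linarith
    have hp1 : ((N:ℝ)-M) * (1 - 2^N*(3*ε))
        ≤ ((N:ℝ)-M) * (∑ j : Fin N → Fin 2, Complex.normSq (φ j)) :=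
      mul_le_mul_of_nonneg_left hnormφ hNM0
    have hp2 : ((N:ℝ)-M) * (2^N*(3*ε)) ≤ (N:ℝ) * (2^N*(3*ε)) :=
      mul_le_mul_of_nonneg_right (by linarith) (by positivity)
    rw [← hnormχφ] at hp1
    nlinarith [hp1, hp2, hdiag, hsum1]
  refine le_of_forall_pos_le_add fun δ hδ => ?_
  set K : ℝ := 15 * N * 2^N with hK
  have hK0 : 0 ≤ K := by positivity
  set ε : ℝ := min 1 (δ / (K+1)) with hεdef
  have hε0 : 0 < ε := lt_min one_pos (div_pos hδ (by linarith))
  have hε1 : ε ≤ 1 := min_le_left _ _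
  have h := main ε hε0 hε1
  have hKε : K * ε ≤ δ := by
    have h1 : ε ≤ δ/(K+1) := min_le_right _ _
    have h2 : K * ε ≤ K * (δ/(K+1)) := mul_le_mul_of_nonneg_left h1 hK0
    have h3 : K * (δ/(K+1)) ≤ (K+1) * (δ/(K+1)) :=
      mul_le_mul_of_nonneg_right (by linarith) (by positivity)
    have h4 : (K+1) * (δ/(K+1)) = δ := by field_simp
    linarith
  linarith
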